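/- Let p,q ≥ 0, n = p+q ≥ 1, let γ be a (p,q)-clan, and let w₀ ∈ S_n be the longest element (w₀(i) = n+1−i). Then every complete flag F in the set Y₀ = { F : dim(F_i ∩ E_p) = γ(i;+) and dim(F_i ∩ Ẽ_q) = γ(i;−) for all 1 ≤ i ≤ n } satisfies, for all i,j ∈ {1,…,n}, the inequalities dim(F_i ∩ E_j) ≥ r_{u(γ)}(i,j) and dim(F_i ∩ Ẽ_j) ≥ r_{w₀·v(γ)}(i,j). In particular, Y₀ (and hence the K-orbit Q_γ ⊆ Y₀) is contained in the Richardson set determined by the Schubert conditions of u(γ) and the opposite Schubert conditions of v(γ). -/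

import Mathlib

open Finset Module

noncomputable section

/-- Symbols of an FS-pattern: `+`, `-`, `F` (first occurrence / opener),
`S` (second occurrence / closer). -/
inductive FSSymbol : Type
  | plus : FSSymbol
  | minus : FSSymbol
  | fst : FSSymbol
  | snd : FSSymbol
  deriving DecidableEq

/-- A `(p,q)`-clan on `{1,…,p+q}` (positions are `Fin (p+q)`, `0`-based).
`symbol i = Sum.inl j` means positions `i` and `j` carry the same natural
number (they form an arc), and `symbol i = Sum.inr true` (resp. `false`)
means position `i` carries a `+` (resp. a `-`).  The number of `+`'s minus
the number of `-`'s equals `p - q`. -/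
structure Clan (p q : ℕ) where
  symbol : Fin (p + q) → (Fin (p + q)) ⊕ Bool
  mate_ne : ∀ i j, symbol i = Sum.inl j → j ≠ i
  mate_invol : ∀ i j, symbol i = Sum.inl j → symbol j = Sum.inl i
  balance : (univ.filter fun i => symbol i = Sum.inr true).card + q
      = (univ.filter fun i => symbol i = Sum.inr false).card + p

namespace Clan

variable {p q : ℕ}

/-- `γ(i;+)`: the number of `+` signs and of arcs `(s,t)` with `t ≤ i`
among the first `i` positions (`i` is `1`-based). -/
def cplus (γ : Clan p q) (i : ℕ) : ℕ :=
  (univ.filter fun k : Fin (p + q) =>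
    k.val < i ∧ (γ.symbol k = Sum.inr true ∨ ∃ j, γ.symbol k = Sum.inl j ∧ j < k)).card

/-- `γ(i;-)`: the number of `-` signs and of arcs `(s,t)` with `t ≤ i`
among the first `i` positions (`i` is `1`-based). -/
def cminus (γ : Clan p q) (i : ℕ) : ℕ :=
  (univ.filter fun k : Fin (p + q) =>
    k.val < i ∧ (γ.symbol k = Sum.inr false ∨ ∃ j, γ.symbol k = Sum.inl j ∧ j < k)).card

/-- `γ(i;j)`: the number of arcs `(s,t)` with `s ≤ i < j < t`
(`i`, `j` are `1`-based). -/
def cpair (γ : Clan p q) (i j : ℕ) : ℕ :=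
  (univ.filter fun s : Fin (p + q) =>
    s.val < i ∧ ∃ t, γ.symbol s = Sum.inl t ∧ s < t ∧ j ≤ t.val).card

/-- The FS-pattern of a clan: signs stay, openers become `F`, closers `S`. -/
def FS (γ : Clan p q) (i : Fin (p + q)) : FSSymbol :=
  match γ.symbol i with
  | Sum.inr true => FSSymbol.plus
  | Sum.inr false => FSSymbol.minus
  | Sum.inl j => if j < i then FSSymbol.snd else FSSymbol.fst

/-- A clan avoids the pattern `(1,2,1,2)` iff no two of its arcs cross. -/
def Avoids1212 (γ : Clan p q) : Prop :=
  ¬ ∃ i1 i2 i3 i4 : Fin (p + q), i1 < i2 ∧ i2 < i3 ∧ i3 < i4 ∧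
      γ.symbol i1 = Sum.inl i3 ∧ γ.symbol i2 = Sum.inl i4

/-- `γ₊`: positions carrying a `+` or the second occurrence of a number. -/
def plusSet (γ : Clan p q) : Finset (Fin (p + q)) :=
  univ.filter fun i => γ.symbol i = Sum.inr true ∨ ∃ j, γ.symbol i = Sum.inl j ∧ j < i

/-- `γ̃₊`: positions carrying a `+` or the first occurrence of a number. -/
def tplusSet (γ : Clan p q) : Finset (Fin (p + q)) :=
  univ.filter fun i => γ.symbol i = Sum.inr true ∨ ∃ j, γ.symbol i = Sum.inl j ∧ i < j

end Clan

/-- The rank matrix `r_w(i,j) = #{k ≤ i : w(k) ≤ j}` (`i`, `j` are `1`-based). -/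
def rankMatrix {n : ℕ} (w : Equiv.Perm (Fin n)) (i j : ℕ) : ℕ :=
  (univ.filter fun k : Fin n => k.val < i ∧ (w k).val < j).card

/-- `u` is the permutation `u(γ)`: it assigns the values `p, p-1, …, 1` to the
positions of `γ₊` taken in increasing order, and `n, n-1, …, p+1` to the
positions of `γ₋` taken in increasing order (values are `0`-based, so the
`1`-based value of `u` at `i` is `(u i).val + 1`). -/
def IsUPerm {p q : ℕ} (γ : Clan p q) (u : Equiv.Perm (Fin (p + q))) : Prop :=
  ∀ i : Fin (p + q),
    (i ∈ γ.plusSet → (u i).val + 1 + (γ.plusSet.filter fun j => j < i).card = p) ∧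
    (i ∉ γ.plusSet →
      (u i).val + 1 + (univ.filter fun j => j ∉ γ.plusSet ∧ j < i).card = p + q)

/-- `v` is the permutation `v(γ)`: it assigns the values `1, …, p` to the
positions of `γ̃₊` taken in increasing order, and `p+1, …, n` to the
positions of `γ̃₋` taken in increasing order (values are `0`-based). -/
def IsVPerm {p q : ℕ} (γ : Clan p q) (v : Equiv.Perm (Fin (p + q))) : Prop :=
  ∀ i : Fin (p + q),
    (i ∈ γ.tplusSet → (v i).val = (γ.tplusSet.filter fun j => j < i).card) ∧
    (i ∉ γ.tplusSet →
      (v i).val = p + (univ.filter fun j => j ∉ γ.tplusSet ∧ j < i).card)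

/-- `E_j ⊆ ℂⁿ`: the span of the first `j` standard basis vectors, realized as
the subspace of vectors vanishing in coordinates `≥ j`. -/
def Efirst (n j : ℕ) : Submodule ℂ (Fin n → ℂ) :=
  ⨅ k ∈ {k : Fin n | j ≤ k.val}, LinearMap.ker (LinearMap.proj k : (Fin n → ℂ) →ₗ[ℂ] ℂ)

/-- `Ẽ_j ⊆ ℂⁿ`: the span of the last `j` standard basis vectors, realized as
the subspace of vectors vanishing in coordinates `< n - j`. -/
def Elast (n j : ℕ) : Submodule ℂ (Fin n → ℂ) :=
  ⨅ k ∈ {k : Fin n | k.val < n - j}, LinearMap.ker (LinearMap.proj k : (Fin n → ℂ) →ₗ[ℂ] ℂ)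

/-- The projection `π : ℂⁿ → E_p` with kernel `Ẽ_q` (for `n = p + q`). -/
def projE (n p : ℕ) : (Fin n → ℂ) →ₗ[ℂ] (Fin n → ℂ) where
  toFun v := fun k => if k.val < p then v k else 0
  map_add' u v := by funext k; by_cases h : k.val < p <;> simp [h]
  map_smul' c v := by funext k; by_cases h : k.val < p <;> simp [h]

/-- A complete flag `F_0 ⊂ F_1 ⊂ ⋯ ⊂ F_n` in `ℂⁿ`, `dim F_i = i`. -/
structure CompleteFlag (n : ℕ) where
  F : Fin (n + 1) → Submodule ℂ (Fin n → ℂ)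
  mono : Monotone F
  finrank_eq : ∀ i, finrank ℂ ↥(F i) = i.val

/-- Membership of a complete flag in the set `Q_γ`: the three linear-algebraic
conditions of Theorem `orbit_description`. -/
def MemQ {p q : ℕ} (γ : Clan p q) (Fl : CompleteFlag (p + q)) : Prop :=
  (∀ i : ℕ, 1 ≤ i → ∀ hi : i ≤ p + q,
      finrank ℂ ↥(Fl.F ⟨i, by omega⟩ ⊓ Efirst (p + q) p) = γ.cplus i ∧
      finrank ℂ ↥(Fl.F ⟨i, by omega⟩ ⊓ Elast (p + q) q) = γ.cminus i) ∧
  (∀ i j : ℕ, 1 ≤ i → ∀ hij : i < j, ∀ hj : j ≤ p + q,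
      finrank ℂ ↥((Fl.F ⟨i, by omega⟩).map (projE (p + q) p) ⊔ Fl.F ⟨j, by omega⟩)
        = j + γ.cpair i j)

/-- Membership in `K = GL(p,ℂ) × GL(q,ℂ)`, the block-diagonal subgroup of
`GL(p+q, ℂ)`: all entries mixing the first `p` and last `q` coordinates
vanish. -/
def InK (p q : ℕ) (g : (Matrix (Fin (p + q)) (Fin (p + q)) ℂ)ˣ) : Prop :=
  ∀ i j : Fin (p + q), ¬(i.val < p ↔ j.val < p) →
    (g : Matrix (Fin (p + q)) (Fin (p + q)) ℂ) i j = 0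

/-- `Fl' = g · Fl`: the flag `Fl'` is obtained by applying the invertible
matrix `g` to each subspace of the flag `Fl`. -/
def FlagMapsTo {n : ℕ} (g : (Matrix (Fin n) (Fin n) ℂ)ˣ) (Fl Fl' : CompleteFlag n) : Prop :=
  ∀ i, Fl'.F i = (Fl.F i).map (Matrix.mulVecLin (g : Matrix (Fin n) (Fin n) ℂ))

/-- A partial matching of `{1,…,n}`, given by its set of arcs `(s,t)`, `s < t`;
distinct arcs are disjoint. -/
def IsPartialMatching {n : ℕ} (M : Finset (Fin n × Fin n)) : Prop :=
  (∀ a ∈ M, a.1 < a.2) ∧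
  ∀ a ∈ M, ∀ b ∈ M, a ≠ b → a.1 ≠ b.1 ∧ a.1 ≠ b.2 ∧ a.2 ≠ b.1 ∧ a.2 ≠ b.2

/-- The number of crossing pairs of arcs of `M` (each crossing pair counted
once, ordered by its smaller opener). -/
def crossNum {n : ℕ} (M : Finset (Fin n × Fin n)) : ℕ :=
  ((M ×ˢ M).filter fun ab =>
    ab.1.1 < ab.2.1 ∧ ab.2.1 < ab.1.2 ∧ ab.1.2 < ab.2.2).card

/-- `M` is a noncrossing partial matching whose openers are exactly the
`F`-positions of the pattern `d` and whose closers are exactly the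
`S`-positions of `d`. -/
def MatchesPattern {n : ℕ} (d : Fin n → FSSymbol) (M : Finset (Fin n × Fin n)) : Prop :=
  IsPartialMatching M ∧
  (∀ i : Fin n, (∃ t, (i, t) ∈ M) ↔ d i = FSSymbol.fst) ∧
  (∀ i : Fin n, (∃ s, (s, i) ∈ M) ↔ d i = FSSymbol.snd) ∧
  ¬ ∃ a ∈ M, ∃ b ∈ M, a.1 < b.1 ∧ b.1 < a.2 ∧ a.2 < b.2

/-- The values `{w(1),…,w(i)}` arranged in increasing order. -/
def sortedPrefix {n : ℕ} (w : Equiv.Perm (Fin n)) (i : ℕ) : List (Fin n) :=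
  Finset.sort ((univ.filter fun k : Fin n => k.val < i).image w) (· ≤ ·)



section Helpers

/-- Cardinality of a `Fin`-filtered set equals that of the corresponding range filter. -/
lemma card_filter_val (n : ℕ) (P : ℕ → Prop) [DecidablePred P] :
    (univ.filter fun k : Fin n => P k.val).card = ((Finset.range n).filter P).card := by
  rw [← Finset.card_image_of_injOn (Set.injOn_of_injective Fin.val_injective)]
  congr 1
  ext m
  simp only [Finset.mem_image, Finset.mem_filter, Finset.mem_univ, true_and, Finset.mem_range]
  constructor
  · rintro ⟨k, hk, rfl⟩; exact ⟨k.isLt, hk⟩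
  · rintro ⟨hm, hP⟩; exact ⟨⟨m, hm⟩, hP, rfl⟩

lemma card_filter_val_lt (n i : ℕ) (hi : i ≤ n) :
    (univ.filter fun k : Fin n => k.val < i).card = i := by
  rw [card_filter_val n (fun m => m < i)]
  have h : (Finset.range n).filter (fun m => m < i) = Finset.range i := by
    ext m; simp only [Finset.mem_filter, Finset.mem_range]; omega
  rw [h, Finset.card_range]

lemma card_filter_le_val (n j : ℕ) :
    (univ.filter fun k : Fin n => j ≤ k.val).card = n - j := by
  rw [card_filter_val n (fun m => j ≤ m)]
  have h : (Finset.range n).filter (fun m => j ≤ m) = Finset.Ico j n := by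
    ext m; simp only [Finset.mem_filter, Finset.mem_range, Finset.mem_Ico]; omega
  rw [h, Nat.card_Ico]

lemma mem_Efirst {n j : ℕ} (v : Fin n → ℂ) :
    v ∈ Efirst n j ↔ ∀ k : Fin n, j ≤ k.val → v k = 0 := by
  simp [Efirst, Submodule.mem_iInf, Set.mem_setOf_eq]

lemma mem_Elast {n j : ℕ} (v : Fin n → ℂ) :
    v ∈ Elast n j ↔ ∀ k : Fin n, k.val < n - j → v k = 0 := by
  simp [Elast, Submodule.mem_iInf, Set.mem_setOf_eq]

lemma Efirst_mono (n : ℕ) {j j' : ℕ} (h : j ≤ j') : Efirst n j ≤ Efirst n j' := by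
  intro v hv
  rw [mem_Efirst] at *
  intro k hk
  exact hv k (h.trans hk)

lemma Elast_mono (n : ℕ) {j j' : ℕ} (h : j ≤ j') : Elast n j ≤ Elast n j' := by
  intro v hv
  rw [mem_Elast] at *
  intro k hk
  exact hv k (by omega)

lemma finrank_Efirst (n j : ℕ) (h : j ≤ n) : finrank ℂ (Efirst n j) = j := by
  have hker : Efirst n j = LinearMap.ker
      (LinearMap.funLeft ℂ ℂ (fun k : {k : Fin n // j ≤ k.val} => (k : Fin n))) := by
    ext v
    simp only [mem_Efirst, LinearMap.mem_ker, funext_iff, LinearMap.funLeft_apply,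
      Pi.zero_apply]
    constructor
    · intro hv k; exact hv k k.2
    · intro hv k hk; exact hv ⟨k, hk⟩
  have hsurj : Function.Surjective
      (LinearMap.funLeft ℂ ℂ (fun k : {k : Fin n // j ≤ k.val} => (k : Fin n))) :=
    LinearMap.funLeft_surjective_of_injective ℂ ℂ _ Subtype.val_injective
  have hrn := LinearMap.finrank_range_add_finrank_ker
      (LinearMap.funLeft ℂ ℂ (fun k : {k : Fin n // j ≤ k.val} => (k : Fin n)))
  rw [LinearMap.range_eq_top.mpr hsurj, finrank_top, finrank_pi, finrank_pi] at hrn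
  have hcard : Fintype.card {k : Fin n // j ≤ k.val} = n - j := by
    rw [Fintype.card_subtype]
    exact card_filter_le_val n j
  rw [hcard, Fintype.card_fin] at hrn
  rw [hker]
  omega

lemma finrank_Elast (n j : ℕ) (h : j ≤ n) : finrank ℂ (Elast n j) = j := by
  have hker : Elast n j = LinearMap.ker
      (LinearMap.funLeft ℂ ℂ (fun k : {k : Fin n // k.val < n - j} => (k : Fin n))) := by
    ext v
    simp only [mem_Elast, LinearMap.mem_ker, funext_iff, LinearMap.funLeft_apply,
      Pi.zero_apply]
    constructor
    · intro hv k; exact hv k k.2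
    · intro hv k hk; exact hv ⟨k, hk⟩
  have hsurj : Function.Surjective
      (LinearMap.funLeft ℂ ℂ (fun k : {k : Fin n // k.val < n - j} => (k : Fin n))) :=
    LinearMap.funLeft_surjective_of_injective ℂ ℂ _ Subtype.val_injective
  have hrn := LinearMap.finrank_range_add_finrank_ker
      (LinearMap.funLeft ℂ ℂ (fun k : {k : Fin n // k.val < n - j} => (k : Fin n)))
  rw [LinearMap.range_eq_top.mpr hsurj, finrank_top, finrank_pi, finrank_pi] at hrn
  have hcard : Fintype.card {k : Fin n // k.val < n - j} = n - j := by
    rw [Fintype.card_subtype]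
    exact card_filter_val_lt n (n - j) (by omega)
  rw [hcard, Fintype.card_fin] at hrn
  rw [hker]
  omega

lemma finrank_inf_ge {n : ℕ} (A B W : Submodule ℂ (Fin n → ℂ)) (hA : A ≤ W) (hB : B ≤ W)
    {a b m : ℕ} (ha : finrank ℂ A = a) (hb : finrank ℂ B = b) (hm : finrank ℂ W = m) :
    a + b ≤ finrank ℂ ↥(A ⊓ B) + m := by
  subst ha; subst hb; subst hm
  have h1 := Submodule.finrank_sup_add_finrank_inf_eq A B
  have h2 : finrank ℂ ↥(A ⊔ B) ≤ finrank ℂ W := Submodule.finrank_mono (sup_le hA hB)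
  omega

lemma finrank_congr' {n : ℕ} {X Y : Submodule ℂ (Fin n → ℂ)} (h : X = Y) :
    finrank ℂ X = finrank ℂ Y := by rw [h]

lemma count_strict {n : ℕ} (P : Fin n → Prop) [DecidablePred P] {k k' : Fin n}
    (hk : P k) (h : k < k') :
    (univ.filter fun j => P j ∧ j < k).card < (univ.filter fun j => P j ∧ j < k').card := by
  apply Finset.card_lt_card
  rw [Finset.ssubset_iff_of_subset]
  · refine ⟨k, ?_, ?_⟩
    · simp only [Finset.mem_filter, Finset.mem_univ, true_and]; exact ⟨hk, h⟩
    · simp only [Finset.mem_filter, Finset.mem_univ, true_and, not_and]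
      intro _; exact lt_irrefl k
  · intro x hx
    simp only [Finset.mem_filter, Finset.mem_univ, true_and] at *
    exact ⟨hx.1, hx.2.trans h⟩

lemma count_lt_total {n : ℕ} (P : Fin n → Prop) [DecidablePred P] {k : Fin n} {i : ℕ}
    (hk : P k) (hki : k.val < i) :
    (univ.filter fun j => P j ∧ j < k).card
      < (univ.filter fun j => P j ∧ j.val < i).card := by
  apply Finset.card_lt_card
  rw [Finset.ssubset_iff_of_subset]
  · refine ⟨k, ?_, ?_⟩
    · simp only [Finset.mem_filter, Finset.mem_univ, true_and]; exact ⟨hk, hki⟩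
    · simp only [Finset.mem_filter, Finset.mem_univ, true_and, not_and]
      intro _; exact lt_irrefl k
  · intro x hx
    simp only [Finset.mem_filter, Finset.mem_univ, true_and] at *
    exact ⟨hx.1, (Fin.lt_def.mp hx.2).trans hki⟩

lemma part_card_le {n : ℕ} (P : Fin n → Prop) [DecidablePred P] (i a : ℕ)
    (S : Finset (Fin n))
    (hS : ∀ k ∈ S, P k ∧ k.val < i ∧ a ≤ (univ.filter fun j => P j ∧ j < k).card) :
    S.card ≤ (univ.filter fun j => P j ∧ j.val < i).card - a := by
  have hle : S.card ≤ (Finset.Ico a ((univ.filter fun j => P j ∧ j.val < i).card)).card := by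
    apply Finset.card_le_card_of_injOn (fun k => (univ.filter fun j => P j ∧ j < k).card)
    · intro k hk
      obtain ⟨h1, h2, h3⟩ := hS k hk
      exact Finset.mem_Ico.mpr ⟨h3, count_lt_total P h1 h2⟩
    · intro k hk k' hk' hfe
      rcases lt_trichotomy k k' with h | h | h
      · exact absurd hfe (count_strict P (hS k hk).1 h).ne
      · exact h
      · exact absurd hfe.symm (count_strict P (hS k' hk').1 h).ne
  rwa [Nat.card_Ico] at hle

lemma filter_card_congr {n : ℕ} (A B : Fin n → Prop) [DecidablePred A] [DecidablePred B]
    (h : ∀ k, A k ↔ B k) :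
    (univ.filter A).card = (univ.filter B).card := by
  congr 1
  ext k
  simp only [Finset.mem_filter, Finset.mem_univ, true_and]
  exact h k

namespace Clan

variable {p q : ℕ}

lemma cplus_eq (γ : Clan p q) (i : ℕ) :
    γ.cplus i = (univ.filter fun k : Fin (p + q) => k ∈ γ.plusSet ∧ k.val < i).card := by
  unfold cplus
  apply filter_card_congr
  intro k
  simp only [plusSet, Finset.mem_filter, Finset.mem_univ, true_and]
  tauto

lemma plus_filter_eq (γ : Clan p q) (k : Fin (p + q)) :
    (γ.plusSet.filter fun j => j < k)
      = univ.filter fun j => j ∈ γ.plusSet ∧ j < k := by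
  ext x
  simp only [Finset.mem_filter, Finset.mem_univ, true_and]

lemma tplus_filter_eq (γ : Clan p q) (k : Fin (p + q)) :
    (γ.tplusSet.filter fun j => j < k)
      = univ.filter fun j => j ∈ γ.tplusSet ∧ j < k := by
  ext x
  simp only [Finset.mem_filter, Finset.mem_univ, true_and]

lemma not_tplus_iff (γ : Clan p q) (k : Fin (p + q)) :
    k ∉ γ.tplusSet
      ↔ (γ.symbol k = Sum.inr false ∨ ∃ j, γ.symbol k = Sum.inl j ∧ j < k) := by
  simp only [tplusSet, Finset.mem_filter, Finset.mem_univ, true_and]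
  rcases h : γ.symbol k with m | b
  · have hne := γ.mate_ne k m h
    have hne' : m.val ≠ k.val := fun hc => hne (Fin.ext hc)
    simp only [h, Sum.inl.injEq, reduceCtorEq, false_or, exists_eq_left', not_lt,
      Fin.lt_def, Fin.le_def]
    omega
  · cases b <;> simp [h]

lemma cminus_eq (γ : Clan p q) (i : ℕ) :
    γ.cminus i = (univ.filter fun k : Fin (p + q) => k ∉ γ.tplusSet ∧ k.val < i).card := by
  unfold cminus
  apply filter_card_congr
  intro k
  rw [not_tplus_iff]
  tauto

lemma cplus_add_eq (γ : Clan p q) (i : ℕ) (hi : i ≤ p + q) :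
    γ.cplus i + (univ.filter fun j : Fin (p + q) => j ∉ γ.plusSet ∧ j.val < i).card = i := by
  rw [cplus_eq]
  have h := Finset.card_filter_add_card_filter_not
    (s := (univ.filter fun k : Fin (p + q) => k.val < i)) (p := fun k => k ∈ γ.plusSet)
  rw [card_filter_val_lt _ _ hi, Finset.filter_filter, Finset.filter_filter] at h
  rw [filter_card_congr (fun k : Fin (p + q) => k ∈ γ.plusSet ∧ k.val < i)
    (fun k => k.val < i ∧ k ∈ γ.plusSet) (fun k => and_comm),
    filter_card_congr (fun j : Fin (p + q) => j ∉ γ.plusSet ∧ j.val < i)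
    (fun k => k.val < i ∧ k ∉ γ.plusSet) (fun k => and_comm)]
  exact h

lemma tplus_add_eq (γ : Clan p q) (i : ℕ) (hi : i ≤ p + q) :
    (univ.filter fun j : Fin (p + q) => j ∈ γ.tplusSet ∧ j.val < i).card + γ.cminus i = i := by
  rw [cminus_eq]
  have h := Finset.card_filter_add_card_filter_not
    (s := (univ.filter fun k : Fin (p + q) => k.val < i)) (p := fun k => k ∈ γ.tplusSet)
  rw [card_filter_val_lt _ _ hi, Finset.filter_filter, Finset.filter_filter] at h
  rw [filter_card_congr (fun k : Fin (p + q) => k ∈ γ.tplusSet ∧ k.val < i)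
    (fun k => k.val < i ∧ k ∈ γ.tplusSet) (fun k => and_comm),
    filter_card_congr (fun j : Fin (p + q) => j ∉ γ.tplusSet ∧ j.val < i)
    (fun k => k.val < i ∧ k ∉ γ.tplusSet) (fun k => and_comm)]
  exact h

end Clan

end Helpers

/-- Every flag in
`Y₀ = {F : dim(F_i ∩ E_p) = γ(i;+), dim(F_i ∩ Ẽ_q) = γ(i;-) ∀ i}` satisfies
the Schubert conditions of `u(γ)` and the opposite Schubert conditions of
`v(γ)`: `dim(F_i ∩ E_j) ≥ r_{u(γ)}(i,j)` and
`dim(F_i ∩ Ẽ_j) ≥ r_{w₀·v(γ)}(i,j)` for all `i,j`. -/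
theorem Y0_subset_richardson {p q : ℕ} (hn : 1 ≤ p + q) (γ : Clan p q)
    (u v : Equiv.Perm (Fin (p + q))) (hu : IsUPerm γ u) (hv : IsVPerm γ v)
    (Fl : CompleteFlag (p + q))
    (hFl : ∀ i : ℕ, 1 ≤ i → ∀ hi : i ≤ p + q,
      finrank ℂ ↥(Fl.F ⟨i, by omega⟩ ⊓ Efirst (p + q) p) = γ.cplus i ∧
      finrank ℂ ↥(Fl.F ⟨i, by omega⟩ ⊓ Elast (p + q) q) = γ.cminus i) :
    ∀ i j : ℕ, 1 ≤ i → ∀ hi : i ≤ p + q, 1 ≤ j → j ≤ p + q →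
      rankMatrix u i j ≤ finrank ℂ ↥(Fl.F ⟨i, by omega⟩ ⊓ Efirst (p + q) j) ∧
      rankMatrix (Fin.revPerm * v) i j
        ≤ finrank ℂ ↥(Fl.F ⟨i, by omega⟩ ⊓ Elast (p + q) j) := by
  intro i j hi1 hin hj1 hjn
  have hii : i < p + q + 1 := by omega
  have hFn : finrank ℂ (Fl.F ⟨i, hii⟩) = i := Fl.finrank_eq ⟨i, hii⟩
  have hTop : finrank ℂ (⊤ : Submodule ℂ (Fin (p + q) → ℂ)) = p + q := by
    rw [finrank_top]; exact finrank_fin_fun ℂ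
  constructor
  · -- Schubert condition for u
    show rankMatrix u i j ≤ finrank ℂ ↥(Fl.F ⟨i, hii⟩ ⊓ Efirst (p + q) j)
    have hcp : finrank ℂ ↥(Fl.F ⟨i, hii⟩ ⊓ Efirst (p + q) p) = γ.cplus i :=
      (hFl i hi1 hin).1
    -- dim bound 2 : i + j ≤ D + (p + q)
    have hd2 : i + j ≤ finrank ℂ ↥(Fl.F ⟨i, hii⟩ ⊓ Efirst (p + q) j) + (p + q) :=
      finrank_inf_ge (Fl.F ⟨i, hii⟩) (Efirst (p + q) j) ⊤ le_top le_top
        hFn (finrank_Efirst _ _ hjn) hTop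
    -- dim bound 1 : cplus i ≤ D + (p - j)
    have hd1 : γ.cplus i ≤ finrank ℂ ↥(Fl.F ⟨i, hii⟩ ⊓ Efirst (p + q) j) + (p - j) := by
      rcases le_or_gt j p with hjp | hjp
      · have hEj : Efirst (p + q) j ≤ Efirst (p + q) p := Efirst_mono _ hjp
        have hsub := finrank_inf_ge (Fl.F ⟨i, hii⟩ ⊓ Efirst (p + q) p)
          (Efirst (p + q) j) (Efirst (p + q) p) inf_le_right hEj
          hcp (finrank_Efirst _ _ hjn) (finrank_Efirst _ _ (by omega : p ≤ p + q))
        have heq : finrank ℂ ↥((Fl.F ⟨i, hii⟩ ⊓ Efirst (p + q) p) ⊓ Efirst (p + q) j)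
            = finrank ℂ ↥(Fl.F ⟨i, hii⟩ ⊓ Efirst (p + q) j) :=
          finrank_congr' (by rw [inf_assoc, inf_eq_right.mpr hEj])
        omega
      · have hEj : Efirst (p + q) p ≤ Efirst (p + q) j := Efirst_mono _ hjp.le
        have hmn : finrank ℂ ↥(Fl.F ⟨i, hii⟩ ⊓ Efirst (p + q) p)
            ≤ finrank ℂ ↥(Fl.F ⟨i, hii⟩ ⊓ Efirst (p + q) j) :=
          Submodule.finrank_mono (inf_le_inf_left _ hEj)
        omega
    -- counting bound
    rw [rankMatrix]
    have hsplit := Finset.card_filter_add_card_filter_not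
      (s := univ.filter fun k : Fin (p + q) => k.val < i ∧ (u k).val < j)
      (p := fun k => k ∈ γ.plusSet)
    have hple : ((univ.filter fun k : Fin (p + q) => k.val < i ∧ (u k).val < j).filter
        (fun k => k ∈ γ.plusSet)).card ≤ γ.cplus i - (p - j) := by
      rw [γ.cplus_eq]
      apply part_card_le (fun k => k ∈ γ.plusSet)
      intro k hk
      rw [Finset.mem_filter, Finset.mem_filter] at hk
      obtain ⟨⟨-, hki, hkj⟩, hkp⟩ := hk
      refine ⟨hkp, hki, ?_⟩
      have hueq := (hu k).1 hkp
      rw [γ.plus_filter_eq] at hueq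
      omega
    have hmle : ((univ.filter fun k : Fin (p + q) => k.val < i ∧ (u k).val < j).filter
        (fun k => ¬ k ∈ γ.plusSet)).card ≤
        (univ.filter fun j' : Fin (p + q) => j' ∉ γ.plusSet ∧ j'.val < i).card
          - (p + q - j) := by
      apply part_card_le (fun k => k ∉ γ.plusSet)
      intro k hk
      rw [Finset.mem_filter, Finset.mem_filter] at hk
      obtain ⟨⟨-, hki, hkj⟩, hkp⟩ := hk
      refine ⟨hkp, hki, ?_⟩
      have hueq := (hu k).2 hkp
      omega
    have hadd := γ.cplus_add_eq i hin
    omega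
  · -- opposite Schubert condition for v
    show rankMatrix (Fin.revPerm * v) i j
        ≤ finrank ℂ ↥(Fl.F ⟨i, hii⟩ ⊓ Elast (p + q) j)
    have hcm : finrank ℂ ↥(Fl.F ⟨i, hii⟩ ⊓ Elast (p + q) q) = γ.cminus i :=
      (hFl i hi1 hin).2
    have hd2 : i + j ≤ finrank ℂ ↥(Fl.F ⟨i, hii⟩ ⊓ Elast (p + q) j) + (p + q) :=
      finrank_inf_ge (Fl.F ⟨i, hii⟩) (Elast (p + q) j) ⊤ le_top le_top
        hFn (finrank_Elast _ _ hjn) hTop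
    have hd1 : γ.cminus i ≤ finrank ℂ ↥(Fl.F ⟨i, hii⟩ ⊓ Elast (p + q) j) + (q - j) := by
      rcases le_or_gt j q with hjq | hjq
      · have hEj : Elast (p + q) j ≤ Elast (p + q) q := Elast_mono _ hjq
        have hsub := finrank_inf_ge (Fl.F ⟨i, hii⟩ ⊓ Elast (p + q) q)
          (Elast (p + q) j) (Elast (p + q) q) inf_le_right hEj
          hcm (finrank_Elast _ _ hjn) (finrank_Elast _ _ (by omega : q ≤ p + q))
        have heq : finrank ℂ ↥((Fl.F ⟨i, hii⟩ ⊓ Elast (p + q) q) ⊓ Elast (p + q) j)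
            = finrank ℂ ↥(Fl.F ⟨i, hii⟩ ⊓ Elast (p + q) j) :=
          finrank_congr' (by rw [inf_assoc, inf_eq_right.mpr hEj])
        omega
      · have hEj : Elast (p + q) q ≤ Elast (p + q) j := Elast_mono _ hjq.le
        have hmn : finrank ℂ ↥(Fl.F ⟨i, hii⟩ ⊓ Elast (p + q) q)
            ≤ finrank ℂ ↥(Fl.F ⟨i, hii⟩ ⊓ Elast (p + q) j) :=
          Submodule.finrank_mono (inf_le_inf_left _ hEj)
        omega
    rw [rankMatrix]
    have hrev : ∀ k : Fin (p + q), ((Fin.revPerm * v : Equiv.Perm (Fin (p + q))) k).val = p + q - ((v k).val + 1) := by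
      intro k
      rw [Equiv.Perm.mul_apply]
      exact Fin.val_rev (v k)
    have hsplit := Finset.card_filter_add_card_filter_not
      (s := univ.filter fun k : Fin (p + q) => k.val < i ∧ ((Fin.revPerm * v : Equiv.Perm (Fin (p + q))) k).val < j)
      (p := fun k => k ∈ γ.tplusSet)
    have hple : ((univ.filter fun k : Fin (p + q) =>
          k.val < i ∧ ((Fin.revPerm * v : Equiv.Perm (Fin (p + q))) k).val < j).filter
        (fun k => k ∈ γ.tplusSet)).card ≤
        (univ.filter fun j' : Fin (p + q) => j' ∈ γ.tplusSet ∧ j'.val < i).card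
          - (p + q - j) := by
      apply part_card_le (fun k => k ∈ γ.tplusSet)
      intro k hk
      rw [Finset.mem_filter, Finset.mem_filter] at hk
      obtain ⟨⟨-, hki, hkj⟩, hkp⟩ := hk
      refine ⟨hkp, hki, ?_⟩
      have hveq := (hv k).1 hkp
      rw [γ.tplus_filter_eq] at hveq
      rw [hrev k] at hkj
      have hvlt : (v k).val < p + q := (v k).isLt
      omega
    have hmle : ((univ.filter fun k : Fin (p + q) =>
          k.val < i ∧ ((Fin.revPerm * v : Equiv.Perm (Fin (p + q))) k).val < j).filter
        (fun k => ¬ k ∈ γ.tplusSet)).card ≤ γ.cminus i - (q - j) := by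
      rw [γ.cminus_eq]
      apply part_card_le (fun k => k ∉ γ.tplusSet)
      intro k hk
      rw [Finset.mem_filter, Finset.mem_filter] at hk
      obtain ⟨⟨-, hki, hkj⟩, hkp⟩ := hk
      refine ⟨hkp, hki, ?_⟩
      have hveq := (hv k).2 hkp
      rw [hrev k] at hkj
      have hvlt : (v k).val < p + q := (v k).isLt
      omega
    have hadd := γ.tplus_add_eq i hin
    omega
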